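/- Let f ∈ ℂ[z] be a polynomial of degree d > 1 with leading coefficient a_d, let n ≥ 1, and let z ∈ ℂ with (f^n)'(z) ≠ 0. Then (d^n−1)^{-1}·log|(f^n)'(z)| − g_f(z) = (d^n−1)^{-1}·Σ_{j=0}^{n−1} Σ_c m_c·log[f^j(z), c] + (d−1)·(d^n−1)^{-1}·Σ_{j=0}^{n−1} ((1/2)·log(1+|f^j(z)|²) − g_f(f^j(z))) + (Σ_c m_c·(1/2)·log(1+|c|²) + log d + log|a_d|)·n/(d^n−1), where the sums over c range over the roots c ∈ ℂ of f' and m_c is the multiplicity of c as a root of f'. -/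

import Mathlib

open Polynomial MeasureTheory Filter

/-- The `n`-th iterate of a polynomial `f` (as a polynomial). -/
noncomputable def polyIter (f : Polynomial ℂ) : ℕ → Polynomial ℂ
  | 0 => Polynomial.X
  | n + 1 => f.comp (polyIter f n)

/-- The chordal distance `[w,a]` between two points of `ℂ`. -/
noncomputable def chordal (w a : ℂ) : ℝ :=
  ‖w - a‖ / (Real.sqrt (1 + ‖w‖ ^ 2) * Real.sqrt (1 + ‖a‖ ^ 2))

lemma polyIter_eval_comm (f : Polynomial ℂ) (z : ℂ) (m : ℕ) :
    (polyIter f m).eval (f.eval z) = f.eval ((polyIter f m).eval z) := by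
  induction m with
  | zero => simp [polyIter]
  | succ k ih => simp [polyIter, Polynomial.eval_comp, ih]

lemma multiset_log_prod (s : Multiset ℝ) (h : ∀ x ∈ s, x ≠ 0) :
    Real.log s.prod = (s.map Real.log).sum := by
  induction s using Multiset.induction with
  | empty => simp
  | cons a t ih =>
    simp only [Multiset.prod_cons, Multiset.map_cons, Multiset.sum_cons]
    rw [Real.log_mul (h a (Multiset.mem_cons_self a t))
      (Multiset.prod_ne_zero fun h0 => h 0 (Multiset.mem_cons_of_mem h0) rfl),
      ih fun x hx => h x (Multiset.mem_cons_of_mem hx)]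

theorem stmt11 (f : Polynomial ℂ) (d : ℕ) (hd : 1 < d) (hdeg : f.natDegree = d)
    (g : ℂ → ℝ)
    (hg : ∀ z : ℂ, Tendsto
      (fun n : ℕ => Real.log (max 1 ‖(polyIter f n).eval z‖) / (d : ℝ) ^ n)
      atTop (nhds (g z)))
    (n : ℕ) (hn : 1 ≤ n) (z : ℂ)
    (hz : (Polynomial.derivative (polyIter f n)).eval z ≠ 0) :
    Real.log ‖(Polynomial.derivative (polyIter f n)).eval z‖ /
        ((d : ℝ) ^ n - 1) - g z =
      (∑ j ∈ Finset.range n,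
          (((Polynomial.derivative f).roots).map
            (fun c => Real.log (chordal ((polyIter f j).eval z) c))).sum) /
        ((d : ℝ) ^ n - 1) +
      ((d : ℝ) - 1) / ((d : ℝ) ^ n - 1) *
        ∑ j ∈ Finset.range n,
          ((1 / 2) * Real.log (1 + ‖(polyIter f j).eval z‖ ^ 2) -
            g ((polyIter f j).eval z)) +
      ((((Polynomial.derivative f).roots).map
          (fun c => (1 / 2) * Real.log (1 + ‖c‖ ^ 2))).sum +
        Real.log d + Real.log ‖f.leadingCoeff‖) *
        n / ((d : ℝ) ^ n - 1) := by
  have hd1 : (1:ℝ) < (d:ℝ) := by exact_mod_cast hd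
  have hdR0 : (d:ℝ) ≠ 0 := by positivity
  have hdn1 : (1:ℝ) < (d:ℝ)^n := one_lt_pow₀ hd1 (by omega)
  have hT : ((d:ℝ)^n - 1) ≠ 0 := by linarith
  have hdm1 : ((d:ℝ) - 1) ≠ 0 := by linarith
  have hf0 : f ≠ 0 := fun h => by simp [h] at hdeg; omega
  have hlc0 : f.leadingCoeff ≠ 0 := Polynomial.leadingCoeff_ne_zero.mpr hf0
  set w : ℕ → ℂ := fun j => (polyIter f j).eval z with hw
  have hwsucc : ∀ j, w (j+1) = f.eval (w j) := fun j => by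
    simp [hw, polyIter, Polynomial.eval_comp]
  -- g scaling
  have hgf : ∀ u : ℂ, g (f.eval u) = d * g u := by
    intro u
    have h1 := hg (f.eval u)
    have h2 : Tendsto
        (fun m : ℕ => Real.log (max 1 (‖(polyIter f (m+1)).eval u‖)) / (d:ℝ)^(m+1))
        atTop (nhds (g u)) := (hg u).comp (tendsto_add_atTop_nat 1)
    have h3 := h2.const_mul (d:ℝ)
    have h4 : Tendsto
        (fun m : ℕ => Real.log (max 1 (‖(polyIter f m).eval (f.eval u)‖)) / (d:ℝ)^m)
        atTop (nhds ((d:ℝ) * g u)) := by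
      refine h3.congr (fun m => ?_)
      have : (polyIter f (m+1)).eval u = (polyIter f m).eval (f.eval u) := by
        simp [polyIter, Polynomial.eval_comp, polyIter_eval_comm]
      rw [this]
      field_simp
      ring
    exact tendsto_nhds_unique h1 h4
  have hgw : ∀ j, g (w j) = (d:ℝ)^j * g z := by
    intro j
    induction j with
    | zero => simp [hw, polyIter]
    | succ k ih => rw [hwsucc k, hgf, ih]; ring
  -- derivative product formula
  have hD : ∀ m, (Polynomial.derivative (polyIter f m)).eval z
      = ∏ j ∈ Finset.range m, (Polynomial.derivative f).eval (w j) := by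
    intro m
    induction m with
    | zero => simp [polyIter]
    | succ k ih =>
      rw [Finset.prod_range_succ, ← ih]
      show (Polynomial.derivative (f.comp (polyIter f k))).eval z = _
      rw [Polynomial.derivative_comp, Polynomial.eval_mul, Polynomial.eval_comp]
  have hDne : ∀ j ∈ Finset.range n, (Polynomial.derivative f).eval (w j) ≠ 0 := by
    rw [hD n] at hz
    exact Finset.prod_ne_zero_iff.mp hz
  -- structure of f'
  set r : Multiset ℂ := (Polynomial.derivative f).roots with hr
  have hsplit : (Polynomial.derivative f).Splits :=
    IsAlgClosed.splits _
  have hfcoeff : f.coeff d = f.leadingCoeff := by rw [Polynomial.leadingCoeff, hdeg]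
  have hcoeffD : (Polynomial.derivative f).coeff (d-1) = d * f.leadingCoeff := by
    rw [Polynomial.coeff_derivative]
    have h1 : d - 1 + 1 = d := by omega
    have h2 : ((d - 1 : ℕ) : ℂ) + 1 = (d : ℂ) := by
      push_cast [Nat.cast_sub (by omega : 1 ≤ d)]
      ring
    rw [h1, hfcoeff, h2]
    ring
  have hcoeffD0 : (Polynomial.derivative f).coeff (d-1) ≠ 0 := by
    rw [hcoeffD]
    exact mul_ne_zero (by exact_mod_cast (by omega : d ≠ 0)) hlc0
  have hndD : (Polynomial.derivative f).natDegree = d - 1 := by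
    refine le_antisymm ?_ (Polynomial.le_natDegree_of_ne_zero hcoeffD0)
    simpa [hdeg] using Polynomial.natDegree_derivative_le f
  have hlcD : (Polynomial.derivative f).leadingCoeff = d * f.leadingCoeff := by
    rw [Polynomial.leadingCoeff, hndD, hcoeffD]
  have hlcD0 : (Polynomial.derivative f).leadingCoeff ≠ 0 := by
    rw [hlcD]
    exact mul_ne_zero (by exact_mod_cast (by omega : d ≠ 0)) hlc0
  have hcard : (Multiset.card r : ℝ) = (d:ℝ) - 1 := by
    have := (Polynomial.splits_iff_card_roots).mp hsplit
    rw [hr, this, hndD]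
    have : (1:ℕ) ≤ d := by omega
    push_cast [Nat.cast_sub this]
    ring
  have hfac := Polynomial.Splits.eq_prod_roots hsplit
  -- pointwise log formula
  have hlog : ∀ u : ℂ, (Polynomial.derivative f).eval u ≠ 0 →
      Real.log (‖(Polynomial.derivative f).eval u‖) =
        (r.map fun c => Real.log (chordal u c)).sum
        + ((d:ℝ) - 1) * ((1/2) * Real.log (1 + ‖u‖ ^ 2))
        + ((r.map fun c => (1/2) * Real.log (1 + ‖c‖ ^2)).sum
            + Real.log d + Real.log (‖f.leadingCoeff‖)) := by
    intro u hu
    have heval : (Polynomial.derivative f).eval u =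
        (Polynomial.derivative f).leadingCoeff * (r.map fun c => u - c).prod := by
      conv_lhs => rw [hfac]
      simp [Polynomial.eval_multiset_prod, Multiset.map_map, Function.comp, hr]
    have hne : ∀ c ∈ r, u - c ≠ 0 := by
      intro c hc hc0
      apply hu
      rw [heval]
      refine mul_eq_zero_of_right _ (Multiset.prod_eq_zero ?_)
      rw [← hc0]
      exact Multiset.mem_map_of_mem _ hc
    have habs : ‖(Polynomial.derivative f).eval u‖ =
        ((d:ℝ) * ‖f.leadingCoeff‖) * ((r.map fun c => u - c).map (fun x => ‖x‖)).prod := by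
      rw [heval, norm_mul, hlcD, norm_mul, Complex.norm_natCast]
      congr 1
      exact map_multiset_prod (normHom (α := ℂ)) _
    have hlogconst : Real.log ((d:ℝ) * ‖f.leadingCoeff‖)
        = Real.log d + Real.log (‖f.leadingCoeff‖) :=
      Real.log_mul hdR0 (by simpa using hlc0)
    have hsq : ∀ v : ℂ, (0:ℝ) < Real.sqrt (1 + ‖v‖ ^ 2) := by
      intro v; apply Real.sqrt_pos.mpr; positivity
    have hlogsq : ∀ v : ℂ, Real.log (Real.sqrt (1 + ‖v‖ ^ 2))
        = (1/2) * Real.log (1 + ‖v‖ ^ 2) := by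
      intro v
      rw [Real.log_sqrt (by positivity)]; ring
    have hterm : ∀ c ∈ r, Real.log (‖u - c‖)
        = Real.log (chordal u c) + ((1/2) * Real.log (1 + ‖u‖ ^ 2)
          + (1/2) * Real.log (1 + ‖c‖ ^ 2)) := by
      intro c hc
      have h1 : ‖u - c‖ ≠ 0 := by
        simpa [sub_eq_zero] using hne c hc
      rw [chordal, Real.log_div h1 (mul_pos (hsq u) (hsq c)).ne', Real.log_mul (hsq u).ne' (hsq c).ne',
        hlogsq, hlogsq]
      ring
    have hprodne : ∀ x ∈ (r.map fun c => u - c).map (fun x => ‖x‖), x ≠ 0 := by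
      intro x hx
      rw [Multiset.map_map] at hx
      obtain ⟨c, hc, rfl⟩ := Multiset.mem_map.mp hx
      simpa [sub_eq_zero] using hne c hc
    have hprodne' : ((r.map fun c => u - c).map (fun x => ‖x‖)).prod ≠ 0 := by
      intro h0
      exact hprodne 0 (Multiset.prod_eq_zero_iff.mp h0) rfl
    rw [habs]
    rw [Real.log_mul (mul_ne_zero hdR0 (by simpa using hlc0)) hprodne']
    rw [multiset_log_prod _ hprodne]
    rw [hlogconst]
    simp only [Multiset.map_map, Function.comp_def]
    have hmc : (r.map fun c => Real.log (‖u - c‖)).sum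
        = (r.map fun c => Real.log (chordal u c)).sum
          + (((d:ℝ) - 1) * ((1/2) * Real.log (1 + ‖u‖ ^ 2))
            + (r.map fun c => (1/2) * Real.log (1 + ‖c‖ ^ 2)).sum) := by
      rw [Multiset.map_congr rfl hterm, Multiset.sum_map_add, Multiset.sum_map_add]
      congr 1
      congr 1
      rw [Multiset.map_const', Multiset.sum_replicate, nsmul_eq_mul, hcard]
    rw [hmc]
    ring
  -- global sum formula
  set A : ℝ := ∑ j ∈ Finset.range n,
      (r.map fun c => Real.log (chordal (w j) c)).sum with hA
  set B : ℝ := ∑ j ∈ Finset.range n,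
      (1/2) * Real.log (1 + ‖w j‖ ^ 2) with hB
  set K : ℝ := (r.map fun c => (1/2) * Real.log (1 + ‖c‖ ^ 2)).sum
      + Real.log d + Real.log (‖f.leadingCoeff‖) with hK
  have hsum : Real.log (‖(Polynomial.derivative (polyIter f n)).eval z‖)
      = A + ((d:ℝ) - 1) * B + K * n := by
    rw [hD n, Complex.norm_prod, Real.log_prod (fun j hj => by simpa using hDne j hj)]
    rw [Finset.sum_congr rfl (fun j hj => hlog (w j) (hDne j hj))]
    rw [Finset.sum_add_distrib, Finset.sum_add_distrib, ← Finset.mul_sum,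
      Finset.sum_const, Finset.card_range]
    simp only [hA, hB, hK, nsmul_eq_mul]
    ring
  have hG : ((d:ℝ) - 1) * (∑ j ∈ Finset.range n, g (w j)) = ((d:ℝ)^n - 1) * g z := by
    have h1 : ∑ j ∈ Finset.range n, g (w j) = (∑ j ∈ Finset.range n, (d:ℝ)^j) * g z := by
      rw [Finset.sum_mul]
      exact Finset.sum_congr rfl fun j _ => hgw j
    rw [h1, geom_sum_eq hd1.ne' n]
    field_simp
  have hsub : ∑ j ∈ Finset.range n,
      ((1/2) * Real.log (1 + ‖w j‖ ^ 2) - g (w j))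
      = B - ∑ j ∈ Finset.range n, g (w j) := Finset.sum_sub_distrib _ _
  show Real.log (‖(Polynomial.derivative (polyIter f n)).eval z‖)
        / ((d:ℝ)^n - 1) - g z
      = A / ((d:ℝ)^n - 1)
        + ((d:ℝ) - 1) / ((d:ℝ)^n - 1) * ∑ j ∈ Finset.range n,
            ((1/2) * Real.log (1 + ‖w j‖ ^ 2) - g (w j))
        + K * n / ((d:ℝ)^n - 1)
  rw [hsub, hsum]
  field_simp
  linear_combination hG
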